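/- Joint profit maximization is an equilibrium: if T* ∈ (0, T_max) maximizes the joint profit function π(T) := (s T − d T) · T over [0, T_max], then the balanced pair (d T*, s T*) is a Nash equilibrium of the interdealer game. -/

import Mathlib

open Set

/-- Interdealer trade quantity `Q(x,y) = min (D x) (S y)`. -/
noncomputable def interQ (D S : ℝ → ℝ) (x y : ℝ) : ℝ := min (D x) (S y)

/-- Payoff of `BD_mm`. -/
noncomputable def piMM (D S : ℝ → ℝ) (x y : ℝ) : ℝ :=
  (1 / 2) * max (y - x) 0 * interQ D S x y - max (D x - interQ D S x y) 0 * x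

/-- Payoff of `BD_rm`. -/
noncomputable def piRM (D S : ℝ → ℝ) (x y : ℝ) : ℝ :=
  (1 / 2) * max (y - x) 0 * interQ D S x y - max (S y - interQ D S x y) 0 * y

/-- Nash equilibrium of the interdealer game. -/
def IsNash (D S : ℝ → ℝ) (rb x y : ℝ) : Prop :=
  0 ≤ x ∧ x ≤ y ∧ y ≤ rb ∧
  (∀ x' ∈ Set.Icc (0:ℝ) y, piMM D S x' y ≤ piMM D S x y) ∧
  (∀ y' ∈ Set.Icc x rb, piRM D S x y' ≤ piRM D S x y)

/-- Joint profit maximization is an equilibrium: if `T* ∈ (0, T_max)` maximizes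
`(s T − d T) · T` over `[0, T_max]`, then `(d T*, s T*)` is a Nash equilibrium. -/
theorem jpm_is_equilibrium
    (rhat rb Tmax : ℝ) (D S d s : ℝ → ℝ)
    (hrhat : 0 < rhat) (hrb : rhat < rb) (hTmax : 0 < Tmax)
    (hDc : ContinuousOn D (Icc 0 rb)) (hDm : StrictMonoOn D (Icc 0 rb))
    (hD0 : D 0 = 0) (hDr : D rhat = Tmax)
    (hSc : ContinuousOn S (Icc 0 rb)) (hSa : StrictAntiOn S (Icc 0 rb))
    (hSb : S rb = 0) (hSr : S rhat = Tmax)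
    (U : Set ℝ) (hUo : IsOpen U) (hU : Icc (0:ℝ) rb ⊆ U)
    (hD2 : ContDiffOn ℝ 2 D U) (hS2 : ContDiffOn ℝ 2 S U)
    (hD' : ∀ x ∈ Icc (0:ℝ) rb, 0 < deriv D x)
    (hD'' : ∀ x ∈ Icc (0:ℝ) rb, deriv (deriv D) x < 0)
    (hS' : ∀ x ∈ Icc (0:ℝ) rb, deriv S x < 0)
    (hS'' : ∀ x ∈ Icc (0:ℝ) rb, deriv (deriv S) x < 0)
    (hd : ∀ T ∈ Icc (0:ℝ) Tmax, d T ∈ Icc (0:ℝ) rhat ∧ D (d T) = T)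
    (hs : ∀ T ∈ Icc (0:ℝ) Tmax, s T ∈ Icc rhat rb ∧ S (s T) = T)
    (Tstar : ℝ) (hTstar : Tstar ∈ Ioo (0:ℝ) Tmax)
    (hmax : ∀ T ∈ Icc (0:ℝ) Tmax,
      (s T - d T) * T ≤ (s Tstar - d Tstar) * Tstar) :
    IsNash D S rb (d Tstar) (s Tstar) := by
  obtain ⟨hT0, hTm⟩ := hTstar
  have hTstarIcc : Tstar ∈ Icc (0:ℝ) Tmax := ⟨hT0.le, hTm.le⟩
  obtain ⟨⟨hx0, hxr⟩, hDx⟩ := hd Tstar hTstarIcc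
  obtain ⟨⟨hyr, hyb⟩, hSy⟩ := hs Tstar hTstarIcc
  set x := d Tstar with hxdef
  set y := s Tstar with hydef
  have hxy : x ≤ y := hxr.trans hyr
  have hxrb : x ≤ rb := hxy.trans hyb
  have hy0 : 0 ≤ y := hx0.trans hxy
  have hxmem : x ∈ Icc (0:ℝ) rb := ⟨hx0, hxrb⟩
  have hymem : y ∈ Icc (0:ℝ) rb := ⟨hy0, hyb⟩
  have h0mem : (0:ℝ) ∈ Icc (0:ℝ) rb := ⟨le_refl _, by linarith⟩
  have hrbmem : rb ∈ Icc (0:ℝ) rb := ⟨by linarith, le_refl _⟩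
  have hQ : interQ D S x y = Tstar := by simp [interQ, hDx, hSy]
  have hpiMMstar : piMM D S x y = (1/2) * (y - x) * Tstar := by
    simp [piMM, hQ, hDx, max_eq_left (sub_nonneg.mpr hxy)]
  have hpiRMstar : piRM D S x y = (1/2) * (y - x) * Tstar := by
    simp [piRM, hQ, hSy, max_eq_left (sub_nonneg.mpr hxy)]
  refine ⟨hx0, hxy, hyb, ?_, ?_⟩
  · rintro x' ⟨hx'0, hx'y⟩
    have hx'rb : x' ≤ rb := hx'y.trans hyb
    have hx'mem : x' ∈ Icc (0:ℝ) rb := ⟨hx'0, hx'rb⟩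
    by_cases hc : D x' ≤ Tstar
    · set T' := D x' with hT'def
      have hT'0 : 0 ≤ T' := by
        have := hDm.monotoneOn h0mem hx'mem hx'0
        rw [hD0] at this; exact this
      have hT'Icc : T' ∈ Icc (0:ℝ) Tmax := ⟨hT'0, hc.trans hTm.le⟩
      obtain ⟨⟨hd'0, hd'r⟩, hDd'⟩ := hd T' hT'Icc
      obtain ⟨⟨hs'r, hs'b⟩, hSs'⟩ := hs T' hT'Icc
      have hd'mem : d T' ∈ Icc (0:ℝ) rb := ⟨hd'0, hd'r.trans hrb.le⟩
      have hx'eq : d T' = x' := hDm.injOn hd'mem hx'mem (by rw [hDd'])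
      have hs'mem : s T' ∈ Icc (0:ℝ) rb := ⟨hrhat.le.trans hs'r, hs'b⟩
      have hsle : y ≤ s T' := by
        by_contra h
        push_neg at h
        have := hSa hs'mem hymem h
        rw [hSs', hSy] at this
        exact absurd hc (not_le.mpr this)
      have hQ' : interQ D S x' y = T' := by
        rw [interQ, hSy]; exact min_eq_left hc
      have hpi : piMM D S x' y = (1/2) * (y - x') * T' := by
        simp [piMM, hQ', max_eq_left (sub_nonneg.mpr hx'y)]; exact Or.inl hT'def.symm.le
      have key : (s T' - d T') * T' ≤ (y - x) * Tstar := hmax T' hT'Icc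
      have h1 : (y - x') * T' ≤ (s T' - d T') * T' := by
        apply mul_le_mul_of_nonneg_right _ hT'0
        rw [← hx'eq]; linarith
      rw [hpi, hpiMMstar]; linarith
    · push_neg at hc
      have hQ' : interQ D S x' y = Tstar := by
        rw [interQ, hSy]; exact min_eq_right hc.le
      have hx'gt : x < x' := by
        by_contra h
        push_neg at h
        have := hDm.monotoneOn hx'mem hxmem h
        rw [hDx] at this
        exact absurd this (not_le.mpr hc)
      have hpi : piMM D S x' y = (1/2) * max (y - x') 0 * Tstar - (D x' - Tstar) * x' := by
        rw [piMM, hQ', max_eq_left (by linarith : (0:ℝ) ≤ D x' - Tstar)]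
      have h1 : max (y - x') 0 ≤ y - x := max_le (by linarith) (by linarith)
      have h2 : 0 ≤ (D x' - Tstar) * x' := mul_nonneg (by linarith) hx'0
      have h3 : max (y - x') 0 * Tstar ≤ (y - x) * Tstar :=
        mul_le_mul_of_nonneg_right h1 hT0.le
      rw [hpi, hpiMMstar]; linarith
  · rintro y' ⟨hy'x, hy'b⟩
    have hy'0 : 0 ≤ y' := hx0.trans hy'x
    have hy'mem : y' ∈ Icc (0:ℝ) rb := ⟨hy'0, hy'b⟩
    by_cases hc : S y' ≤ Tstar
    · set T' := S y' with hT'def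
      have hT'0 : 0 ≤ T' := by
        have := hSa.antitoneOn hy'mem hrbmem hy'b
        rw [hSb] at this; exact this
      have hT'Icc : T' ∈ Icc (0:ℝ) Tmax := ⟨hT'0, hc.trans hTm.le⟩
      obtain ⟨⟨hd'0, hd'r⟩, hDd'⟩ := hd T' hT'Icc
      obtain ⟨⟨hs'r, hs'b⟩, hSs'⟩ := hs T' hT'Icc
      have hs'mem : s T' ∈ Icc (0:ℝ) rb := ⟨hrhat.le.trans hs'r, hs'b⟩
      have hy'eq : s T' = y' := hSa.injOn hs'mem hy'mem (by rw [hSs'])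
      have hd'mem : d T' ∈ Icc (0:ℝ) rb := ⟨hd'0, hd'r.trans hrb.le⟩
      have hdle : d T' ≤ x := by
        by_contra h
        push_neg at h
        have := hDm hxmem hd'mem h
        rw [hDd', hDx] at this
        exact absurd hc (not_le.mpr this)
      have hQ' : interQ D S x y' = T' := by
        rw [interQ, hDx]; exact min_eq_right hc
      have hpi : piRM D S x y' = (1/2) * (y' - x) * T' := by
        simp [piRM, hQ', max_eq_left (sub_nonneg.mpr hy'x)]; exact Or.inl hT'def.symm.le
      have key : (s T' - d T') * T' ≤ (y - x) * Tstar := hmax T' hT'Icc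
      have h1 : (y' - x) * T' ≤ (s T' - d T') * T' := by
        apply mul_le_mul_of_nonneg_right _ hT'0
        rw [← hy'eq]; linarith
      rw [hpi, hpiRMstar]; linarith
    · push_neg at hc
      have hQ' : interQ D S x y' = Tstar := by
        rw [interQ, hDx]; exact min_eq_left hc.le
      have hy'lt : y' < y := by
        by_contra h
        push_neg at h
        have := hSa.antitoneOn hymem hy'mem h
        rw [hSy] at this
        exact absurd this (not_le.mpr hc)
      have hpi : piRM D S x y' = (1/2) * max (y' - x) 0 * Tstar - (S y' - Tstar) * y' := by
        rw [piRM, hQ', max_eq_left (by linarith : (0:ℝ) ≤ S y' - Tstar)]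
      have h1 : max (y' - x) 0 ≤ y - x := max_le (by linarith) (by linarith)
      have h2 : 0 ≤ (S y' - Tstar) * y' := mul_nonneg (by linarith) hy'0
      have h3 : max (y' - x) 0 * Tstar ≤ (y - x) * Tstar :=
        mul_le_mul_of_nonneg_right h1 hT0.le
      rw [hpi, hpiRMstar]; linarith
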